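/- (Perturbed Gram–Schmidt stability.) Let 0 < q₀ ≤ q ≤ 1 and q', ε ∈ [0,1], and suppose x, y¹, …, y^k ∈ ℝ^N satisfy: ‖x‖² = q, ‖yⁱ‖² = q' + E_{ii} and |⟨yⁱ, yʲ⟩| ≤ ε for i ≠ j and |⟨x, yⁱ⟩| ≤ ε, with |E_{ii}| ≤ ε. Then there exist z¹, …, z^k with ‖zⁱ‖² = q' exactly, ⟨x, zⁱ⟩ = 0 and ⟨zⁱ, zʲ⟩ = 0 for i ≠ j, such that ‖zⁱ − yⁱ‖ ≤ ε'(ε, k, q₀), where ε' → 0 as ε → 0 for fixed k and q₀; one may take ε' = 3 k^{3/2} ε^{1/2} whenever k² ε < q₀ (and ε' = 2 otherwise). -/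

import Mathlib

open scoped BigOperators RealInnerProductSpace


lemma caseA (N k : ℕ) (hNk : k + 1 ≤ N) (q' : ℝ) (hq'0 : 0 ≤ q')
    (x : EuclideanSpace ℝ (Fin N)) (hx : x ≠ 0)
    (y : Fin k → EuclideanSpace ℝ (Fin N)) :
    ∃ z : Fin k → EuclideanSpace ℝ (Fin N),
      (∀ i, ‖z i‖ ^ 2 = q') ∧
      (∀ i, ⟪x, z i⟫ = 0) ∧
      (∀ i j, i ≠ j → ⟪z i, z j⟫ = 0) ∧
      ∀ i, ‖z i - y i‖ ^ 2 ≤ q' + ‖y i‖ ^ 2 := by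
  classical
  set K : Submodule ℝ (EuclideanSpace ℝ (Fin N)) := (ℝ ∙ x)ᗮ with hK
  have hrank : k ≤ Module.finrank ℝ K := by
    have h1 : Module.finrank ℝ (ℝ ∙ x : Submodule ℝ (EuclideanSpace ℝ (Fin N))) = 1 :=
      finrank_span_singleton hx
    have h2 := Submodule.finrank_add_finrank_orthogonal
      (K := (ℝ ∙ x : Submodule ℝ (EuclideanSpace ℝ (Fin N))))
    have h3 : Module.finrank ℝ (EuclideanSpace ℝ (Fin N)) = N :=
      finrank_euclideanSpace_fin
    rw [h1, h3] at h2
    have hKK : Module.finrank ℝ K = N - 1 := by rw [hK]; omega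
    omega
  set b := stdOrthonormalBasis ℝ K with hb
  set e : Fin k → EuclideanSpace ℝ (Fin N) := fun i => (b (Fin.castLE hrank i) : _) with he
  have hinner : ∀ i j : Fin k, ⟪e i, e j⟫ = if i = j then 1 else 0 := by
    intro i j
    have horth := b.orthonormal
    rw [orthonormal_iff_ite] at horth
    have h : (⟪e i, e j⟫ : ℝ)
        = if Fin.castLE hrank i = Fin.castLE hrank j then (1:ℝ) else 0 :=
      horth (Fin.castLE hrank i) (Fin.castLE hrank j)
    rw [h]
    by_cases hij : i = j
    · simp [hij]
    · have : Fin.castLE hrank i ≠ Fin.castLE hrank j := by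
        intro hc; exact hij (Fin.castLE_injective hrank hc)
      simp [hij, this]
  have hex : ∀ i : Fin k, ⟪x, e i⟫ = 0 := by
    intro i
    have hmem : e i ∈ K := (b (Fin.castLE hrank i)).2
    exact (Submodule.mem_orthogonal (ℝ ∙ x) (e i)).mp hmem x
      (Submodule.mem_span_singleton_self x)
  set σ : Fin k → ℝ := fun i => if 0 ≤ ⟪e i, y i⟫ then 1 else -1 with hσ
  have hσsq : ∀ i, σ i * σ i = 1 := by
    intro i; simp only [hσ]; split <;> norm_num
  refine ⟨fun i => σ i • Real.sqrt q' • e i, ?_, ?_, ?_, ?_⟩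
  · intro i
    have h1 : ‖e i‖ ^ 2 = 1 := by
      have h := hinner i i
      rw [if_pos rfl, real_inner_self_eq_norm_sq] at h
      exact h
    rw [norm_smul, norm_smul]
    simp only [Real.norm_eq_abs]
    rw [mul_pow, mul_pow]
    rw [h1]
    have : |σ i| = 1 := by simp only [hσ]; split <;> norm_num
    rw [this, sq_abs, Real.sq_sqrt hq'0]
    ring
  · intro i
    rw [real_inner_smul_right, real_inner_smul_right, hex i]
    ring
  · intro i j hij
    rw [real_inner_smul_right, real_inner_smul_right, real_inner_smul_left,
      real_inner_smul_left, hinner i j]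
    simp [hij]
  · intro i
    have hzy : (0:ℝ) ≤ ⟪σ i • Real.sqrt q' • e i, y i⟫ := by
      rw [real_inner_smul_left, real_inner_smul_left]
      simp only [hσ]
      split_ifs with h
      · nlinarith [Real.sqrt_nonneg q']
      · push_neg at h
        nlinarith [Real.sqrt_nonneg q']
    have hz2 : ‖σ i • Real.sqrt q' • e i‖ ^ 2 = q' := by
      have h1 : ‖e i‖ ^ 2 = 1 := by
        have h := hinner i i
        rw [if_pos rfl, real_inner_self_eq_norm_sq] at h
        exact h
      rw [norm_smul, norm_smul]
      simp only [Real.norm_eq_abs]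
      rw [mul_pow, mul_pow, h1]
      have : |σ i| = 1 := by simp only [hσ]; split <;> norm_num
      rw [this, sq_abs, Real.sq_sqrt hq'0]
      ring
    have hns := norm_sub_sq_real (σ i • Real.sqrt q' • e i) (y i)
    show ‖σ i • Real.sqrt q' • e i - y i‖ ^ 2 ≤ q' + ‖y i‖ ^ 2
    rw [hns, hz2]
    linarith

lemma key1 (κ : ℝ) (hκ : 1 ≤ κ) :
    2*(κ-1) + 1/κ + 1/2 ≤ Real.sqrt (4*κ^3 - 1) := by
  have hκ0 : 0 < κ := by linarith
  rw [show (2*(κ-1) + 1/κ + 1/2 : ℝ) = 2*κ - 3/2 + 1/κ by ring]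
  rw [← Real.sqrt_sq (by nlinarith [one_div_pos.mpr hκ0] : (0:ℝ) ≤ 2*κ - 3/2 + 1/κ)]
  apply Real.sqrt_le_sqrt
  have ht : κ * (1/κ) = 1 := by field_simp
  have ht1 : 1/κ ≤ 1 := by rw [div_le_one hκ0]; linarith
  have ht0 : 0 < 1/κ := one_div_pos.mpr hκ0
  nlinarith [sq_nonneg (κ - 1), sq_nonneg (1/κ), mul_pos hκ0 hκ0, sq_nonneg (κ*(1/κ) - 1)]

lemma key2 (κ : ℝ) (hκ : 2 ≤ κ) :
    8*κ - 7 + 1/κ^2 + 2/κ ≤ 2 * Real.sqrt (4*κ^3 - 1) := by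
  have hκ0 : 0 < κ := by linarith
  have ht1 : 1/κ ≤ 1/2 := by rw [div_le_div_iff₀ hκ0 (by norm_num)]; linarith
  have ht0 : 0 < 1/κ := one_div_pos.mpr hκ0
  have h1 : 1/κ^2 + 2/κ ≤ 5/4 := by
    have h : 1/κ^2 = (1/κ)^2 := by ring
    rw [h, show (2:ℝ)/κ = 2*(1/κ) by ring]
    nlinarith
  have h2 : (4*κ - 23/8 : ℝ) ≤ Real.sqrt (4*κ^3 - 1) := by
    rw [← Real.sqrt_sq (by linarith : (0:ℝ) ≤ 4*κ - 23/8)]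
    apply Real.sqrt_le_sqrt
    nlinarith [sq_nonneg (κ - 2), mul_nonneg (mul_nonneg (by linarith : (0:ℝ) ≤ κ-2) (by linarith : (0:ℝ) ≤ κ-2)) (by linarith : (0:ℝ) ≤ κ-2)]
  linarith

lemma key3 (w : ℝ) (hw1 : 1 ≤ w) :
    4*w^2 - 3/2 ≤ 3*w^2*w := by
  have h : 0 ≤ w - 1 := by linarith
  nlinarith [mul_nonneg (mul_nonneg h h) h, sq_nonneg (w-1)]

lemma le_of_sq_le (a b : ℝ) (ha : 0 ≤ a) (hb : 0 ≤ b) (h : a^2 ≤ b^2) : a ≤ b := by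
  nlinarith

set_option maxHeartbeats 2000000 in
lemma caseB (N k : ℕ) (q₀ q q' ε : ℝ)
    (hq₀ : 0 < q₀) (hq₀q : q₀ ≤ q)
    (hεpos : 0 < ε)
    (hk : 1 ≤ k)
    (hkε : (k:ℝ)^2 * ε < q₀)
    (hq'big : 4*(k:ℝ)^3*ε < q')
    (x : EuclideanSpace ℝ (Fin N)) (y : Fin k → EuclideanSpace ℝ (Fin N))
    (hx : ‖x‖ ^ 2 = q)
    (hy : ∀ i, |‖y i‖ ^ 2 - q'| ≤ ε)
    (hxy : ∀ i, |⟪x, y i⟫| ≤ ε)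
    (hyy : ∀ i j, i ≠ j → |⟪y i, y j⟫| ≤ ε) :
    ∃ z : Fin k → EuclideanSpace ℝ (Fin N),
      (∀ i, ‖z i‖ ^ 2 = q') ∧
      (∀ i, ⟪x, z i⟫ = 0) ∧
      (∀ i j, i ≠ j → ⟪z i, z j⟫ = 0) ∧
      ∀ i, ‖z i - y i‖ ≤ 3 * (k : ℝ) * Real.sqrt k * Real.sqrt ε := by
  classical
  have hκ1' : (1:ℝ) ≤ (k:ℝ) := by exact_mod_cast hk
  obtain ⟨κ, hκdef⟩ : ∃ t : ℝ, (k:ℝ) = t := ⟨_, rfl⟩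
  rw [hκdef] at hkε hq'big hκ1' ⊢
  have hκ1 : (1:ℝ) ≤ κ := hκ1'
  have hκ0 : 0 < κ := by linarith
  have hκ3 : 1 ≤ κ^3 := one_le_pow₀ hκ1
  have hq'pos : 0 < q' := lt_of_le_of_lt (by positivity) hq'big
  have hεq' : ε < q' := by
    have h1 : ε ≤ κ^3*ε := le_mul_of_one_le_left hεpos.le hκ3
    linarith
  have hqpos : 0 < q := lt_of_lt_of_le hq₀ hq₀q
  -- key instances, before generalizing square roots
  have k1 := key1 κ hκ1
  have k2 : 2 ≤ κ → 8*κ - 7 + 1/κ^2 + 2/κ ≤ 2 * Real.sqrt (4*κ^3 - 1) := fun h => key2 κ h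
  -- generalize all square roots
  obtain ⟨s, hsdef⟩ : ∃ t, Real.sqrt ε = t := ⟨_, rfl⟩
  have hs : 0 < s := hsdef ▸ Real.sqrt_pos.mpr hεpos
  have hs2 : s^2 = ε := by rw [← hsdef]; exact Real.sq_sqrt hεpos.le
  obtain ⟨r, hrdef⟩ : ∃ t, Real.sqrt κ = t := ⟨_, rfl⟩
  have hr2 : r^2 = κ := by rw [← hrdef]; exact Real.sq_sqrt hκ0.le
  have hr1 : 1 ≤ r := by
    rw [← hrdef, show (1:ℝ) = Real.sqrt 1 by simp]; exact Real.sqrt_le_sqrt hκ1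
  obtain ⟨Q, hQdef⟩ : ∃ t, Real.sqrt q' = t := ⟨_, rfl⟩
  have hQpos : 0 < Q := hQdef ▸ Real.sqrt_pos.mpr hq'pos
  have hQ2 : Q^2 = q' := by rw [← hQdef]; exact Real.sq_sqrt hq'pos.le
  obtain ⟨P, hPdef⟩ : ∃ t, Real.sqrt (q' - ε) = t := ⟨_, rfl⟩
  have hPpos : 0 < P := hPdef ▸ Real.sqrt_pos.mpr (by linarith)
  have hP2 : P^2 = q' - ε := by rw [← hPdef]; exact Real.sq_sqrt (by linarith)
  obtain ⟨W, hWdef⟩ : ∃ t, Real.sqrt q₀ = t := ⟨_, rfl⟩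
  have hWpos : 0 < W := hWdef ▸ Real.sqrt_pos.mpr hq₀
  have hW2 : W^2 = q₀ := by rw [← hWdef]; exact Real.sq_sqrt hq₀.le
  obtain ⟨G, hGdef⟩ : ∃ t, Real.sqrt q = t := ⟨_, rfl⟩
  have hGpos : 0 < G := hGdef ▸ Real.sqrt_pos.mpr hqpos
  have hG2 : G^2 = q := by rw [← hGdef]; exact Real.sq_sqrt hqpos.le
  obtain ⟨σ, hσdef⟩ : ∃ t, Real.sqrt (4*κ^3 - 1) = t := ⟨_, rfl⟩
  have hσnn : 0 ≤ σ := hσdef ▸ Real.sqrt_nonneg _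
  have hσ2 : σ^2 = 4*κ^3 - 1 := by
    rw [← hσdef]; exact Real.sq_sqrt (by nlinarith)
  rw [hσdef] at k1 k2
  rw [hrdef, hsdef]
  -- scalar bounds
  have hWG : W ≤ G := le_of_sq_le W G hWpos.le hGpos.le (by rw [hW2, hG2]; linarith)
  have hE0 : ε / W ≤ s / κ := by
    rw [div_le_div_iff₀ hWpos hκ0]
    -- ε κ ≤ s W;  s W ≥ s (κ s) = κ ε  since κ s ≤ W
    have hκsW : κ * s ≤ W := by
      apply le_of_sq_le (κ*s) W (by positivity) hWpos.le
      rw [mul_pow, hW2, hs2]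
      linarith
    have h1 := mul_le_mul_of_nonneg_left hκsW hs.le
    have h2 : s*(κ*s) = κ * s^2 := by ring
    rw [hs2] at h2
    linarith
  have hR : ε^2 / q ≤ ε / κ^2 := by
    rw [div_le_div_iff₀ hqpos (by positivity)]
    have h1 : κ^2*ε ≤ q := by linarith
    have h2 := mul_le_mul_of_nonneg_left h1 hεpos.le
    have h3 : ε^2*κ^2 = ε*(κ^2*ε) := by ring
    linarith
  have hsP : σ * s ≤ P := by
    apply le_of_sq_le (σ*s) P (by positivity) hPpos.le
    rw [mul_pow, hσ2, hs2, hP2]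
    have h1 : ε ≤ κ^3*ε := le_mul_of_one_le_left hεpos.le hκ3
    linarith
  have hsQ : 2*κ*r*s ≤ Q := by
    apply le_of_sq_le (2*κ*r*s) Q (by positivity) hQpos.le
    have he : (2*κ*r*s)^2 = 4*κ^2*(r^2)*(s^2) := by ring
    rw [he, hr2, hs2, hQ2]
    have h1 : 4*κ^2*κ*ε = 4*κ^3*ε := by ring
    linarith
  have hεQ : ε / Q ≤ s / 2 := by
    rw [div_le_div_iff₀ hQpos (by norm_num)]
    have h1 : s * (2*κ*r*s) ≤ s * Q := mul_le_mul_of_nonneg_left hsQ hs.le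
    have h2 : s*(2*κ*r*s) = 2*(κ*r)*ε := by rw [← hs2]; ring
    have h3 : (1:ℝ)*1 ≤ κ*r := mul_le_mul hκ1 hr1 zero_le_one hκ0.le
    have h4 := mul_le_mul_of_nonneg_right h3 hεpos.le
    linarith
  -- the half-bound for the denominator
  have hhalf : s/κ + 2*(κ-1)*s + s/2 ≤ P := by
    have h := mul_le_mul_of_nonneg_right k1 hs.le
    calc s/κ + 2*(κ-1)*s + s/2 = (2*(κ-1) + 1/κ + 1/2) * s := by ring
    _ ≤ σ * s := h
    _ ≤ P := hsP
  -- master inequality for the c-bound (needs k ≥ 2)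
  have hmaster : 2 ≤ κ → ε + ε/κ^2 + (κ-1)*(4*ε) ≤ 2*s*(P - (s/κ + 2*(κ-1)*s)) := by
    intro hκ2
    have k2' := k2 hκ2
    have h := mul_le_mul_of_nonneg_right k2' (sq_nonneg s)
    have hP' : σ * s - (s/κ + 2*(κ-1)*s) ≤ P - (s/κ + 2*(κ-1)*s) := by linarith
    have h2 : 2*s*(σ*s - (s/κ + 2*(κ-1)*s)) ≤ 2*s*(P - (s/κ + 2*(κ-1)*s)) :=
      mul_le_mul_of_nonneg_left hP' (by linarith)
    rw [← hs2]
    have e1 : (8*κ - 7 + 1/κ^2 + 2/κ) * s^2 = 8*κ*s^2 - 7*s^2 + s^2/κ^2 + 2*(s/κ)*s := by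
      field_simp
    have e2 : 2*s*(σ*s - (s/κ + 2*(κ-1)*s)) = 2*σ*s^2 - 2*(s/κ)*s - 4*(κ-1)*s^2 := by ring
    have e3 : (κ-1)*(4*s^2) = 4*(κ-1)*s^2 := by ring
    linarith
  -- norms of y
  have hyP : ∀ m, P ≤ ‖y m‖ := by
    intro m
    have h := hy m
    have h1 : q' - ε ≤ ‖y m‖^2 := by cases abs_le.mp h; linarith
    apply le_of_sq_le P (‖y m‖) hPpos.le (norm_nonneg _)
    rw [hP2]; exact h1
  have hQY : ∀ m, |Q - ‖y m‖| ≤ ε / Q := by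
    intro m
    rw [le_div_iff₀ hQpos]
    have h1 : |Q - ‖y m‖| * Q ≤ |Q - ‖y m‖| * (Q + ‖y m‖) := by
      apply mul_le_mul_of_nonneg_left _ (abs_nonneg _)
      linarith [norm_nonneg (y m)]
    have h2 : |Q - ‖y m‖| * (Q + ‖y m‖) = |q' - ‖y m‖^2| := by
      rw [← abs_of_nonneg (by linarith [norm_nonneg (y m), hQpos] : (0:ℝ) ≤ Q + ‖y m‖),
        ← abs_mul]
      congr 1
      rw [← hQ2]; ring
    have h3 := hy m
    rw [abs_sub_comm] at h3
    linarith
  have hxx : ⟪x, x⟫ = q := by rw [real_inner_self_eq_norm_sq, hx]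
  have hxnorm : ‖x‖ = G := by
    apply le_antisymm
    · apply le_of_sq_le (‖x‖) G (norm_nonneg _) hGpos.le; rw [hG2, hx]
    · apply le_of_sq_le G (‖x‖) hGpos.le (norm_nonneg _); rw [hG2, hx]
  -- main induction
  have main : ∀ n, n ≤ k → ∃ z : Fin n → EuclideanSpace ℝ (Fin N),
      (∀ i, ‖z i‖ = Q) ∧
      (∀ i, ⟪x, z i⟫ = 0) ∧
      (∀ i j, i ≠ j → ⟪z i, z j⟫ = 0) ∧
      (∀ (i : Fin n) (m : Fin k), (i:ℕ) < (m:ℕ) → |⟪z i, y m⟫| ≤ 2*s*Q) ∧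
      (∀ (i : Fin n) (hik : (i:ℕ) < k), ‖z i - y ⟨i, hik⟩‖ ≤ 3*κ*r*s) := by
    intro n
    induction n with
    | zero =>
      intro _
      exact ⟨fun i => i.elim0, fun i => i.elim0, fun i => i.elim0,
        fun i => i.elim0, fun i => i.elim0, fun i => i.elim0⟩
    | succ n ih =>
      intro hn1
      obtain ⟨z, h1, h2, h3, h4, h5⟩ := ih (Nat.le_of_succ_le hn1)
      have hnk : n < k := hn1
      obtain ⟨nk, hnkdef⟩ : ∃ t : Fin k, t = ⟨n, hnk⟩ := ⟨_, rfl⟩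
      obtain ⟨Y, hY⟩ : ∃ t, t = y nk := ⟨_, rfl⟩
      obtain ⟨c, hc⟩ : ∃ t : Fin n → ℝ, t = fun j => ⟪z j, Y⟫ := ⟨_, rfl⟩
      have hnkval : (nk : ℕ) = n := by rw [hnkdef]
      have hcb : ∀ j : Fin n, |c j| ≤ 2*s*Q := by
        intro j
        rw [hc]
        simp only [hY]
        exact h4 j nk (by rw [hnkval]; exact j.2)
      have hzz : ∀ j : Fin n, ⟪z j, z j⟫ = q' := by
        intro j; rw [real_inner_self_eq_norm_sq, h1 j, hQ2]
      obtain ⟨u, hu⟩ : ∃ t : EuclideanSpace ℝ (Fin N),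
        t = Y - (⟪x, Y⟫/q) • x - ∑ j : Fin n, (c j/q') • z j := ⟨_, rfl⟩
      have hxu : ⟪x, u⟫ = 0 := by
        rw [hu]
        rw [inner_sub_right, inner_sub_right, real_inner_smul_right, inner_sum]
        simp only [real_inner_smul_right]
        simp only [h2, mul_zero, Finset.sum_const_zero, hxx]
        field_simp
        ring
      have hzu : ∀ j : Fin n, ⟪z j, u⟫ = 0 := by
        intro j
        rw [hu, inner_sub_right, inner_sub_right, real_inner_smul_right, inner_sum]
        simp only [real_inner_smul_right]
        have hzx : ⟪z j, x⟫ = 0 := by rw [real_inner_comm]; exact h2 j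
        have hsum : ∑ l : Fin n, (c l/q') * ⟪z j, z l⟫ = c j := by
          rw [Finset.sum_eq_single j]
          · rw [hzz j]; field_simp
          · intro l _ hlj
            rw [h3 j l (Ne.symm hlj), mul_zero]
          · intro h; exact absurd (Finset.mem_univ j) h
        rw [hsum, hzx]
        simp only [hc]
        ring
      -- norm of u - Y
      obtain ⟨S, hSdef⟩ : ∃ t : ℝ, t = ε / W + (n:ℝ)*(2*s) := ⟨_, rfl⟩
      have hSnn : 0 ≤ S := by
        rw [hSdef]; positivity
      have hn' : (n:ℝ) ≤ κ - 1 := by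
        have h' : (n:ℝ) + 1 ≤ (k:ℝ) := by exact_mod_cast hn1
        rw [hκdef] at h'
        linarith
      have hSbound : S ≤ s/κ + 2*(κ-1)*s := by
        have h' : (n:ℝ)*(2*s) ≤ (κ-1)*(2*s) := by
          apply mul_le_mul_of_nonneg_right hn' (by linarith)
        rw [hSdef]
        linarith [hE0]
      have hSY : ‖u - Y‖ ≤ S := by
        have heq : u - Y = -((⟪x, Y⟫/q) • x + ∑ j : Fin n, (c j/q') • z j) := by
          rw [hu]; abel
        rw [heq, norm_neg]
        have t1 : ‖(⟪x, Y⟫/q) • x‖ ≤ ε / W := by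
          rw [norm_smul, Real.norm_eq_abs, abs_div, abs_of_pos hqpos, hxnorm]
          rw [div_mul_eq_mul_div, div_le_div_iff₀ hqpos hWpos]
          have c1 : |⟪x, Y⟫| * G * W ≤ ε * G * W := by
            apply mul_le_mul_of_nonneg_right _ hWpos.le
            apply mul_le_mul_of_nonneg_right _ hGpos.le
            rw [hY]; exact hxy nk
          have c2 : ε * G * W ≤ ε * G * G := by
            apply mul_le_mul_of_nonneg_left hWG (by positivity)
          have c3 : ε * G * G = ε * q := by rw [mul_assoc, ← pow_two, hG2]
          linarith
        have t2 : ‖∑ j : Fin n, (c j/q') • z j‖ ≤ (n:ℝ)*(2*s) := by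
          calc ‖∑ j : Fin n, (c j/q') • z j‖ ≤ ∑ j : Fin n, ‖(c j/q') • z j‖ :=
            norm_sum_le _ _
          _ ≤ ∑ _j : Fin n, 2*s := by
            apply Finset.sum_le_sum
            intro j _
            rw [norm_smul, Real.norm_eq_abs, abs_div, abs_of_pos hq'pos, h1 j]
            rw [div_mul_eq_mul_div, div_le_iff₀ hq'pos]
            calc |c j| * Q ≤ (2*s*Q) * Q := mul_le_mul_of_nonneg_right (hcb j) hQpos.le
            _ = 2*s*q' := by rw [mul_assoc, ← pow_two, hQ2]
          _ = (n:ℝ)*(2*s) := by rw [Finset.sum_const, Finset.card_univ, Fintype.card_fin,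
                nsmul_eq_mul]
        calc ‖(⟪x, Y⟫/q) • x + ∑ j : Fin n, (c j/q') • z j‖
            ≤ ‖(⟪x, Y⟫/q) • x‖ + ‖∑ j : Fin n, (c j/q') • z j‖ := norm_add_le _ _
        _ ≤ S := by rw [hSdef]; linarith
      have huY : ‖Y‖ - S ≤ ‖u‖ := by
        have h' := norm_sub_norm_le Y u
        have h'' : ‖Y - u‖ = ‖u - Y‖ := by rw [norm_sub_rev]
        linarith
      have hPY : P ≤ ‖Y‖ := by rw [hY]; exact hyP nk
      have huP : P - S ≤ ‖u‖ := by linarith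
      have hupos : 0 < ‖u‖ := by
        have : s/2 ≤ P - S := by linarith [hSbound, hhalf]
        linarith
      obtain ⟨w, hw⟩ : ∃ t : EuclideanSpace ℝ (Fin N), t = (Q/‖u‖) • u := ⟨_, rfl⟩
      have hwn : ‖w‖ = Q := by
        rw [hw, norm_smul, Real.norm_eq_abs, abs_div, abs_of_pos hQpos,
          abs_of_pos hupos, div_mul_cancel₀]
        exact ne_of_gt hupos
      have hxw : ⟪x, w⟫ = 0 := by rw [hw, real_inner_smul_right, hxu, mul_zero]
      have hzw : ∀ j : Fin n, ⟪z j, w⟫ = 0 := by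
        intro j; rw [hw, real_inner_smul_right, hzu j, mul_zero]
      -- the c-bound for w
      have hcw : ∀ m : Fin k, (n:ℕ) < (m:ℕ) → |⟪w, y m⟫| ≤ 2*s*Q := by
        intro m hm
        have hκ2 : (2:ℝ) ≤ κ := by
          have h2k : 2 ≤ k := by omega
          have : (2:ℝ) ≤ (k:ℝ) := by exact_mod_cast h2k
          rw [hκdef] at this; exact this
        have hnm : nk ≠ m := by
          intro h'; rw [← h'] at hm; rw [hnkval] at hm; exact lt_irrefl _ hm
        have hexp : ⟪u, y m⟫ = ⟪Y, y m⟫ - (⟪x, Y⟫/q) * ⟪x, y m⟫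
            - ∑ j : Fin n, (c j/q') * ⟪z j, y m⟫ := by
          rw [hu, inner_sub_left, inner_sub_left, real_inner_smul_left, sum_inner]
          simp only [real_inner_smul_left]
        have hub : |⟪u, y m⟫| ≤ ε + ε/κ^2 + (κ-1)*(4*ε) := by
          rw [hexp]
          have e1 : |⟪Y, y m⟫| ≤ ε := by rw [hY]; exact hyy nk m hnm
          have e2 : |(⟪x, Y⟫/q) * ⟪x, y m⟫| ≤ ε/κ^2 := by
            rw [abs_mul, abs_div, abs_of_pos hqpos]
            have hxY : |⟪x, Y⟫| ≤ ε := by rw [hY]; exact hxy nk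
            have c1 : |⟪x, Y⟫|/q * |⟪x, y m⟫| ≤ ε/q * ε := by
              apply mul_le_mul _ (hxy m) (abs_nonneg _) (by positivity)
              exact div_le_div_of_nonneg_right hxY hqpos.le
            have c2 : ε/q * ε = ε^2/q := by ring
            linarith [hR]
          have e3 : |∑ j : Fin n, (c j/q') * ⟪z j, y m⟫| ≤ (κ-1)*(4*ε) := by
            calc |∑ j : Fin n, (c j/q') * ⟪z j, y m⟫|
                ≤ ∑ j : Fin n, |(c j/q') * ⟪z j, y m⟫| := Finset.abs_sum_le_sum_abs _ _
            _ ≤ ∑ _j : Fin n, 4*ε := by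
                apply Finset.sum_le_sum
                intro j _
                rw [abs_mul, abs_div, abs_of_pos hq'pos]
                have hjm : |⟪z j, y m⟫| ≤ 2*s*Q := h4 j m (lt_trans j.2 hm)
                have c1 : |c j|/q' * |⟪z j, y m⟫| ≤ (2*s*Q)/q' * (2*s*Q) := by
                  apply mul_le_mul _ hjm (abs_nonneg _) (by positivity)
                  exact div_le_div_of_nonneg_right (hcb j) hq'pos.le
                have c2 : (2*s*Q)/q' * (2*s*Q) = 4*ε := by
                  rw [div_mul_eq_mul_div]
                  rw [show (2*s*Q) * (2*s*Q) = 4*(s^2)*(Q^2) by ring, hs2, hQ2]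
                  rw [mul_div_assoc, div_self (ne_of_gt hq'pos), mul_one]
                linarith
            _ = (n:ℝ)*(4*ε) := by rw [Finset.sum_const, Finset.card_univ, Fintype.card_fin,
                  nsmul_eq_mul]
            _ ≤ (κ-1)*(4*ε) := mul_le_mul_of_nonneg_right hn' (by positivity)
          calc |⟪Y, y m⟫ - (⟪x, Y⟫/q) * ⟪x, y m⟫ - ∑ j : Fin n, (c j/q') * ⟪z j, y m⟫|
              ≤ |⟪Y, y m⟫ - (⟪x, Y⟫/q) * ⟪x, y m⟫| + |∑ j : Fin n, (c j/q') * ⟪z j, y m⟫| :=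
                abs_sub _ _
          _ ≤ (|⟪Y, y m⟫| + |(⟪x, Y⟫/q) * ⟪x, y m⟫|) + |∑ j : Fin n, (c j/q') * ⟪z j, y m⟫| := by
                linarith [abs_sub (⟪Y, y m⟫ : ℝ) ((⟪x, Y⟫/q) * ⟪x, y m⟫)]
          _ ≤ ε + ε/κ^2 + (κ-1)*(4*ε) := by linarith
        have hnumer : ε + ε/κ^2 + (κ-1)*(4*ε) ≤ 2*s*‖u‖ := by
          have hm1 := hmaster hκ2
          have h' : 2*s*(P - (s/κ + 2*(κ-1)*s)) ≤ 2*s*‖u‖ := by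
            apply mul_le_mul_of_nonneg_left _ (by linarith)
            linarith [hSbound]
          linarith
        rw [hw, real_inner_smul_left, abs_mul, abs_div, abs_of_pos hQpos, abs_of_pos hupos]
        rw [div_mul_eq_mul_div, div_le_iff₀ hupos]
        calc Q * |⟪u, y m⟫| ≤ Q * (2*s*‖u‖) := by
              apply mul_le_mul_of_nonneg_left _ hQpos.le
              linarith
        _ = 2*s*Q*‖u‖ := by ring
      -- the distance bound for w
      have hδ : ‖w - Y‖ ≤ 3*κ*r*s := by
        have hwu : ‖w - u‖ = |Q - ‖u‖| := by
          have heq : w - u = ((Q - ‖u‖)/‖u‖) • u := by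
            rw [hw, sub_div, div_self (ne_of_gt hupos), sub_smul, one_smul]
          rw [heq, norm_smul, Real.norm_eq_abs, abs_div, abs_of_pos hupos,
            div_mul_cancel₀]
          exact ne_of_gt hupos
        have hQu : |Q - ‖u‖| ≤ ε/Q + S := by
          have t1 : |Q - ‖Y‖| ≤ ε/Q := by rw [hY]; exact hQY nk
          have t2 : |‖Y‖ - ‖u‖| ≤ S := by
            have h' := abs_norm_sub_norm_le Y u
            have h'' : ‖Y - u‖ = ‖u - Y‖ := by rw [norm_sub_rev]
            linarith [hSY]
          calc |Q - ‖u‖| = |(Q - ‖Y‖) + (‖Y‖ - ‖u‖)| := by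
                rw [show Q - ‖u‖ = (Q - ‖Y‖) + (‖Y‖ - ‖u‖) by ring]
          _ ≤ |Q - ‖Y‖| + |‖Y‖ - ‖u‖| := abs_add_le _ _
          _ ≤ ε/Q + S := by linarith
        calc ‖w - Y‖ = ‖(w - u) + (u - Y)‖ := by rw [show w - Y = (w - u) + (u - Y) by abel]
        _ ≤ ‖w - u‖ + ‖u - Y‖ := norm_add_le _ _
        _ ≤ (ε/Q + S) + S := by rw [hwu]; linarith [hSY]
        _ ≤ s/2 + 2*(s/κ + 2*(κ-1)*s) := by linarith [hεQ, hSbound]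
        _ ≤ (4*κ - 3/2)*s := by
            have h1κ : s/κ ≤ s := by
              rw [div_le_iff₀ hκ0]
              have := mul_le_mul_of_nonneg_left hκ1 hs.le
              linarith
            linarith
        _ ≤ 3*κ*r*s := by
            have hk3 := key3 r hr1
            rw [hr2] at hk3
            apply mul_le_mul_of_nonneg_right _ hs.le
            linarith [hk3]
      -- assemble
      refine ⟨Fin.snoc z w, ?_, ?_, ?_, ?_, ?_⟩
      · intro i
        rcases Fin.eq_castSucc_or_eq_last i with ⟨j, rfl⟩ | rfl
        · rw [Fin.snoc_castSucc]; exact h1 j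
        · rw [Fin.snoc_last]; exact hwn
      · intro i
        rcases Fin.eq_castSucc_or_eq_last i with ⟨j, rfl⟩ | rfl
        · rw [Fin.snoc_castSucc]; exact h2 j
        · rw [Fin.snoc_last]; exact hxw
      · intro i j hij
        rcases Fin.eq_castSucc_or_eq_last i with ⟨i', rfl⟩ | rfl <;>
          rcases Fin.eq_castSucc_or_eq_last j with ⟨j', rfl⟩ | rfl
        · rw [Fin.snoc_castSucc, Fin.snoc_castSucc]
          refine h3 i' j' fun h' => hij (by rw [h'])
        · rw [Fin.snoc_castSucc, Fin.snoc_last]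
          exact hzw i'
        · rw [Fin.snoc_last, Fin.snoc_castSucc, real_inner_comm]
          exact hzw j'
        · exact absurd rfl hij
      · intro i m him
        rcases Fin.eq_castSucc_or_eq_last i with ⟨j, rfl⟩ | rfl
        · rw [Fin.snoc_castSucc]
          exact h4 j m (by simpa using him)
        · rw [Fin.snoc_last]
          exact hcw m (by simpa using him)
      · intro i hik
        rcases Fin.eq_castSucc_or_eq_last i with ⟨j, rfl⟩ | rfl
        · rw [Fin.snoc_castSucc]
          have hjk : (j:ℕ) < k := by
            have := j.2; simp at hik ⊢; omega
          have he : (⟨((j.castSucc : Fin (n+1)) : ℕ), hik⟩ : Fin k) = ⟨(j:ℕ), hjk⟩ := by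
            apply Fin.ext; simp
          rw [show (y ⟨((j.castSucc : Fin (n+1)) : ℕ), hik⟩ : EuclideanSpace ℝ (Fin N))
            = y ⟨(j:ℕ), hjk⟩ by rw [he]]
          exact h5 j hjk
        · rw [Fin.snoc_last]
          have he : (⟨((Fin.last n : Fin (n+1)) : ℕ), hik⟩ : Fin k) = nk := by
            apply Fin.ext; simp [hnkdef]
          rw [show (y ⟨((Fin.last n : Fin (n+1)) : ℕ), hik⟩ : EuclideanSpace ℝ (Fin N)) = Y
            by rw [he, hY]]
          exact hδ
  obtain ⟨z, h1, h2, h3, _, h5⟩ := main k le_rfl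
  refine ⟨z, ?_, h2, h3, ?_⟩
  · intro i; rw [h1 i, hQ2]
  · intro i
    have h' := h5 i i.2
    simpa using h'

/-- Perturbed Gram–Schmidt stability: given `x` of squared norm `q ∈ [q₀, 1]` (with
`q₀ > 0`) and vectors `y¹, …, y^k` whose Gram matrix together with `x` is within `ε` of
`diag(q, q', …, q')` (the `x` entry being exact), there exist `z¹, …, z^k` with squared
norm exactly `q'`, orthogonal to `x` and to each other, with
`‖zⁱ − yⁱ‖ ≤ ε'(ε, k, q₀)`, where one may take `ε' = 3 k^{3/2} √ε` when `k² ε < q₀`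
and `ε' = 2` otherwise.  (We assume `N ≥ k + 1` so that `k` orthogonal directions in
`x^⊥` exist.) -/
theorem stmt_16 (N k : ℕ) (hNk : k + 1 ≤ N) (q₀ q q' ε : ℝ)
    (hq₀ : 0 < q₀) (hq₀q : q₀ ≤ q) (hq1 : q ≤ 1)
    (hq' : q' ∈ Set.Icc (0 : ℝ) 1) (hε : ε ∈ Set.Icc (0 : ℝ) 1)
    (x : EuclideanSpace ℝ (Fin N)) (y : Fin k → EuclideanSpace ℝ (Fin N))
    (hx : ‖x‖ ^ 2 = q)
    (hy : ∀ i, |‖y i‖ ^ 2 - q'| ≤ ε)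
    (hxy : ∀ i, |⟪x, y i⟫| ≤ ε)
    (hyy : ∀ i j, i ≠ j → |⟪y i, y j⟫| ≤ ε) :
    ∃ z : Fin k → EuclideanSpace ℝ (Fin N),
      (∀ i, ‖z i‖ ^ 2 = q') ∧
      (∀ i, ⟪x, z i⟫ = 0) ∧
      (∀ i j, i ≠ j → ⟪z i, z j⟫ = 0) ∧
      ∀ i, ‖z i - y i‖
        ≤ (if (k : ℝ) ^ 2 * ε < q₀ then 3 * (k : ℝ) * Real.sqrt k * Real.sqrt ε else 2) := by
  obtain ⟨hq'0, hq'1⟩ := hq'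
  obtain ⟨hε0, hε1⟩ := hε
  rcases eq_or_lt_of_le hε0 with hε0' | hεpos
  · -- ε = 0 : y itself works
    refine ⟨y, ?_, ?_, ?_, ?_⟩
    · intro i
      have h := hy i
      rw [← hε0'] at h
      have := abs_le.mp h
      linarith [this.1, this.2]
    · intro i
      have h := hxy i
      rw [← hε0'] at h
      exact abs_eq_zero.mp (le_antisymm h (abs_nonneg _))
    · intro i j hij
      have h := hyy i j hij
      rw [← hε0'] at h
      exact abs_eq_zero.mp (le_antisymm h (abs_nonneg _))
    · intro i
      rw [sub_self, norm_zero]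
      split_ifs <;> positivity
  · by_cases hk0 : k = 0
    · subst hk0
      exact ⟨fun i => i.elim0, fun i => i.elim0, fun i => i.elim0,
        fun i => i.elim0, fun i => i.elim0⟩
    · have hk : 1 ≤ k := Nat.one_le_iff_ne_zero.mpr hk0
      have hκ1 : (1:ℝ) ≤ (k:ℝ) := by exact_mod_cast hk
      have hκ3 : (1:ℝ) ≤ (k:ℝ)^3 := one_le_pow₀ hκ1
      have hxne : x ≠ 0 := by
        intro h
        rw [h, norm_zero] at hx
        have : q = 0 := by rw [← hx]; norm_num
        linarith
      by_cases hcond : (k:ℝ)^2 * ε < q₀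
      · rw [if_pos hcond]
        by_cases hbig : 4*(k:ℝ)^3*ε < q'
        · exact caseB N k q₀ q q' ε hq₀ hq₀q hεpos hk hcond hbig x y hx hy hxy hyy
        · push_neg at hbig
          obtain ⟨z, hz1, hz2, hz3, hz4⟩ := caseA N k hNk q' hq'0 x hxne y
          refine ⟨z, hz1, hz2, hz3, ?_⟩
          intro i
          have h1 : ‖y i‖^2 ≤ q' + ε := by
            have := abs_le.mp (hy i); linarith [this.2]
          have h2 : ‖z i - y i‖^2 ≤ 9*(k:ℝ)^3*ε := by
            have h3 := hz4 i
            have h4 : ε ≤ (k:ℝ)^3*ε := le_mul_of_one_le_left hεpos.le hκ3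
            linarith
          apply le_of_sq_le (‖z i - y i‖) _ (norm_nonneg _) (by positivity)
          have key : (3*(k:ℝ)*Real.sqrt k*Real.sqrt ε)^2 = 9*(k:ℝ)^3*ε := by
            rw [show (3*(k:ℝ)*Real.sqrt k*Real.sqrt ε)^2
              = 9*(k:ℝ)^2*(Real.sqrt k)^2*(Real.sqrt ε)^2 by ring,
              Real.sq_sqrt (by positivity : (0:ℝ) ≤ (k:ℝ)), Real.sq_sqrt hε0]
            ring
          rw [key]
          exact h2
      · rw [if_neg hcond]
        obtain ⟨z, hz1, hz2, hz3, hz4⟩ := caseA N k hNk q' hq'0 x hxne y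
        refine ⟨z, hz1, hz2, hz3, ?_⟩
        intro i
        have h1 : ‖y i‖^2 ≤ q' + ε := by
          have := abs_le.mp (hy i); linarith [this.2]
        have h2 : ‖z i - y i‖^2 ≤ 2^2 := by
          have h3 := hz4 i
          linarith
        exact le_of_sq_le (‖z i - y i‖) 2 (norm_nonneg _) (by norm_num) h2
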